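/- Let n ≥ 1, let d > 0, let (x_i)_{i∈ℕ} be a sequence in ℝ^n, and let ν be a locally finite Borel measure on ℝ^n satisfying ν(t • A) = t^d · ν(A) for every t > 0 and every Borel set A. Assume: (i) for every L > 0 and every compact C ⊆ ℝ^n the set {i | x_i ∈ L • C} is finite; (ii) for every continuous compactly supported g : ℝ^n → ℝ one has lim_{L→∞} L^{−d} ∑_i g(x_i / L) = ∫ g dν. Let f : ℝ^n → ℝ be continuous, positively homogeneous of degree 1 (f(t • x) = t · f(x) for t > 0), and positive on ℝ^n \ {0}. Then lim_{L→∞} #{i | f(x_i) ≤ L} / L^d = ν({x | f(x) ≤ 1}). -/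

import Mathlib

open MeasureTheory Filter Topology Pointwise

/-- If the rescaled counting measures `L^{-d} ∑ᵢ δ_{xᵢ/L}` of a sequence `(xᵢ)` in `ℝ^n`
converge vaguely to a measure `ν` homogeneous of degree `d > 0`, then for every positive,
continuous, positively 1-homogeneous function `f` the counting function satisfies
`#{i | f (xᵢ) ≤ L} / L^d → ν {f ≤ 1}`. -/
theorem counting_tendsto_of_vague_tendsto (n : ℕ) (hn : 1 ≤ n) (d : ℝ) (hd : 0 < d)
    (x : ℕ → EuclideanSpace ℝ (Fin n))
    (ν : Measure (EuclideanSpace ℝ (Fin n)))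
    [IsLocallyFiniteMeasure ν]
    (hν : ∀ t : ℝ, 0 < t → ∀ A : Set (EuclideanSpace ℝ (Fin n)), MeasurableSet A →
      ν (t • A) = ENNReal.ofReal (t ^ d) * ν A)
    (h_fin : ∀ L : ℝ, 0 < L → ∀ C : Set (EuclideanSpace ℝ (Fin n)), IsCompact C →
      {i : ℕ | x i ∈ L • C}.Finite)
    (h_conv : ∀ g : EuclideanSpace ℝ (Fin n) → ℝ, Continuous g → HasCompactSupport g →
      Tendsto (fun L : ℝ => L ^ (-d) * ∑' i : ℕ, g (L⁻¹ • x i)) atTop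
        (𝓝 (∫ y, g y ∂ν)))
    (f : EuclideanSpace ℝ (Fin n) → ℝ)
    (hf_cont : Continuous f)
    (hf_hom : ∀ t : ℝ, 0 < t → ∀ y, f (t • y) = t * f y)
    (hf_pos : ∀ y : EuclideanSpace ℝ (Fin n), y ≠ 0 → 0 < f y) :
    Tendsto (fun L : ℝ => ({i : ℕ | f (x i) ≤ L}.ncard : ℝ) / L ^ d) atTop
      (𝓝 ((ν {y : EuclideanSpace ℝ (Fin n) | f y ≤ 1}).toReal)) := by
  classical
  -- f 0 = 0
  have hf0 : f 0 = 0 := by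
    have h := hf_hom 2 (by norm_num) 0
    rw [smul_zero] at h; linarith
  -- positive minimum of f on the unit sphere
  haveI : Nonempty (Fin n) := ⟨⟨0, hn⟩⟩
  haveI : Nontrivial (EuclideanSpace ℝ (Fin n)) := by
    refine ⟨⟨EuclideanSpace.single ⟨0, hn⟩ (1 : ℝ), 0, ?_⟩⟩
    intro h
    have := congrArg (fun v : EuclideanSpace ℝ (Fin n) => v ⟨0, hn⟩) h
    simp [EuclideanSpace.single_apply] at this
  obtain ⟨z, hz_mem, hz_min⟩ := (isCompact_sphere (0 : EuclideanSpace ℝ (Fin n)) 1).exists_isMinOn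
    (NormedSpace.sphere_nonempty.2 zero_le_one) hf_cont.continuousOn
  have hz_norm : ‖z‖ = 1 := by simpa using hz_mem
  have hm : 0 < f z := hf_pos z (by intro h; rw [h] at hz_norm; simp at hz_norm)
  set m := f z with hm_def
  have hfm : ∀ y, m * ‖y‖ ≤ f y := by
    intro y
    rcases eq_or_ne y 0 with rfl | hy
    · simp [hf0]
    · have hyn : 0 < ‖y‖ := norm_pos_iff.2 hy
      have hu : ‖y‖⁻¹ • y ∈ Metric.sphere (0 : EuclideanSpace ℝ (Fin n)) 1 := by
        simp [norm_smul, abs_of_pos (inv_pos.2 hyn), inv_mul_cancel₀ hyn.ne']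
      have h1 : m ≤ f (‖y‖⁻¹ • y) := hz_min hu
      have h2 : f y = ‖y‖ * f (‖y‖⁻¹ • y) := by
        conv_lhs => rw [← smul_inv_smul₀ hyn.ne' y]
        rw [hf_hom ‖y‖ hyn]
      rw [h2]; nlinarith
  -- all sublevel sets are compact
  have hcpt : ∀ c : ℝ, IsCompact {y : EuclideanSpace ℝ (Fin n) | f y ≤ c} := by
    intro c
    have hcl : IsClosed {y : EuclideanSpace ℝ (Fin n) | f y ≤ c} :=
      isClosed_le hf_cont continuous_const
    refine (isCompact_closedBall (0 : EuclideanSpace ℝ (Fin n)) (|c| / m)).of_isClosed_subset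
      hcl ?_
    intro y hy
    simp only [Set.mem_setOf_eq] at hy
    have h1 := hfm y
    rw [mem_closedBall_zero_iff, le_div_iff₀ hm]
    nlinarith [le_abs_self c, norm_nonneg y]
  set K := {y : EuclideanSpace ℝ (Fin n) | f y ≤ 1} with hK_def
  have hK_cpt : IsCompact K := hcpt 1
  have hK_meas : MeasurableSet K := (isClosed_le hf_cont continuous_const).measurableSet
  -- scaling of sublevel sets
  have hscale : ∀ t : ℝ, 0 < t → {y : EuclideanSpace ℝ (Fin n) | f y ≤ t} = t • K := by
    intro t ht
    ext y
    rw [Set.mem_smul_set_iff_inv_smul_mem₀ ht.ne']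
    simp only [hK_def, Set.mem_setOf_eq, hf_hom t⁻¹ (inv_pos.2 ht)]
    have htt : t * t⁻¹ = 1 := mul_inv_cancel₀ ht.ne'
    constructor <;> intro h <;> nlinarith [inv_pos.2 ht]
  have hνs : ∀ t : ℝ, 0 < t →
      ν {y : EuclideanSpace ℝ (Fin n) | f y ≤ t} = ENNReal.ofReal (t ^ d) * ν K := by
    intro t ht; rw [hscale t ht, hν t ht K hK_meas]
  set c := (ν K).toReal with hc_def
  have hνs_toReal : ∀ t : ℝ, 0 < t →
      (ν {y : EuclideanSpace ℝ (Fin n) | f y ≤ t}).toReal = t ^ d * c := by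
    intro t ht
    rw [hνs t ht, ENNReal.toReal_mul, ENNReal.toReal_ofReal (Real.rpow_pos_of_pos ht d).le]
  rw [Metric.tendsto_nhds]
  intro ε hε
  -- choose δ
  have hcont : ContinuousAt (fun t : ℝ => t ^ d * c) 1 :=
    (Real.continuousAt_rpow_const 1 d (Or.inl one_ne_zero)).mul continuousAt_const
  have h1t : Tendsto (fun δ : ℝ => (1 + δ) ^ d * c) (𝓝 0) (𝓝 c) := by
    have ht : Tendsto (fun δ : ℝ => 1 + δ) (𝓝 0) (𝓝 1) := by
      simpa using Continuous.tendsto (f := fun δ : ℝ => 1 + δ) (continuous_const.add continuous_id) (0 : ℝ)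
    simpa [Real.one_rpow, Function.comp_def] using hcont.tendsto.comp ht
  have h2t : Tendsto (fun δ : ℝ => (1 - δ) ^ d * c) (𝓝 0) (𝓝 c) := by
    have ht : Tendsto (fun δ : ℝ => 1 - δ) (𝓝 0) (𝓝 1) := by
      simpa using Continuous.tendsto (f := fun δ : ℝ => 1 - δ) (continuous_const.sub continuous_id) (0 : ℝ)
    simpa [Real.one_rpow, Function.comp_def] using hcont.tendsto.comp ht
  have hδε : ∀ᶠ δ : ℝ in 𝓝[>] (0 : ℝ),
      dist ((1 + δ) ^ d * c) c < ε / 2 ∧ dist ((1 - δ) ^ d * c) c < ε / 2 ∧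
        δ ∈ Set.Ioo (0 : ℝ) 1 := by
    have e1 := eventually_nhdsWithin_of_eventually_nhds (a := (0:ℝ)) (s := Set.Ioi (0:ℝ))
      (Metric.tendsto_nhds.mp h1t (ε / 2) (half_pos hε))
    have e2 := eventually_nhdsWithin_of_eventually_nhds (a := (0:ℝ)) (s := Set.Ioi (0:ℝ))
      (Metric.tendsto_nhds.mp h2t (ε / 2) (half_pos hε))
    have e3 : ∀ᶠ δ : ℝ in 𝓝[>] (0 : ℝ), δ ∈ Set.Ioo (0 : ℝ) 1 :=
      Ioo_mem_nhdsGT_of_mem (Set.mem_Ico.2 ⟨le_refl 0, one_pos⟩)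
    filter_upwards [e1, e2, e3] with δ p1 p2 p3 using ⟨p1, p2, p3⟩
  obtain ⟨δ, hδ1, hδ2, hδ0, hδlt1⟩ := hδε.exists
  have hδpos : (0 : ℝ) < δ := hδ0
  -- bump functions
  set g : EuclideanSpace ℝ (Fin n) → ℝ := fun y => max 0 (min 1 ((1 + δ - f y) / δ)) with hg_def
  set g' : EuclideanSpace ℝ (Fin n) → ℝ := fun y => max 0 (min 1 ((1 - f y) / δ)) with hg'_def
  have hg_cont : Continuous g :=
    continuous_const.max (continuous_const.min ((continuous_const.sub hf_cont).div_const δ))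
  have hg'_cont : Continuous g' :=
    continuous_const.max (continuous_const.min ((continuous_const.sub hf_cont).div_const δ))
  have hg_nonneg : ∀ y, 0 ≤ g y := fun y => le_max_left _ _
  have hg'_nonneg : ∀ y, 0 ≤ g' y := fun y => le_max_left _ _
  have hg_le_one : ∀ y, g y ≤ 1 := fun y => max_le zero_le_one (min_le_left _ _)
  have hg'_le_one : ∀ y, g' y ≤ 1 := fun y => max_le zero_le_one (min_le_left _ _)
  have hg_one : ∀ y, f y ≤ 1 → g y = 1 := by
    intro y hy
    have h1 : (1 : ℝ) ≤ (1 + δ - f y) / δ := by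
      rw [le_div_iff₀ hδpos]; linarith
    rw [hg_def]
    simp only
    rw [min_eq_left h1, max_eq_right zero_le_one]
  have hg_zero : ∀ y, 1 + δ < f y → g y = 0 := by
    intro y hy
    have h1 : (1 + δ - f y) / δ < 0 := div_neg_of_neg_of_pos (by linarith) hδpos
    rw [hg_def]
    simp only
    rw [max_eq_left ((min_le_right _ _).trans h1.le)]
  have hg'_one : ∀ y, f y ≤ 1 - δ → g' y = 1 := by
    intro y hy
    have h1 : (1 : ℝ) ≤ (1 - f y) / δ := by
      rw [le_div_iff₀ hδpos]; linarith
    rw [hg'_def]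
    simp only
    rw [min_eq_left h1, max_eq_right zero_le_one]
  have hg'_zero : ∀ y, 1 ≤ f y → g' y = 0 := by
    intro y hy
    have h1 : (1 - f y) / δ ≤ 0 := div_nonpos_of_nonpos_of_nonneg (by linarith) hδpos.le
    rw [hg'_def]
    simp only
    rw [max_eq_left ((min_le_right _ _).trans h1)]
  have hg_supp : HasCompactSupport g :=
    HasCompactSupport.intro (hcpt (1 + δ)) (fun y hy => hg_zero y (lt_of_not_ge hy))
  have hg'_supp : HasCompactSupport g' :=
    HasCompactSupport.intro (hcpt 1) (fun y hy => hg'_zero y (le_of_not_ge hy))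
  -- integral bounds
  have hg_int : Integrable g ν := hg_cont.integrable_of_hasCompactSupport hg_supp
  have hg'_int : Integrable g' ν := hg'_cont.integrable_of_hasCompactSupport hg'_supp
  have hKδ_meas : MeasurableSet {y : EuclideanSpace ℝ (Fin n) | f y ≤ 1 + δ} :=
    (isClosed_le hf_cont continuous_const).measurableSet
  have hKδ'_meas : MeasurableSet {y : EuclideanSpace ℝ (Fin n) | f y ≤ 1 - δ} :=
    (isClosed_le hf_cont continuous_const).measurableSet
  have hind_int : Integrable
      (Set.indicator {y : EuclideanSpace ℝ (Fin n) | f y ≤ 1 + δ} (fun _ => (1 : ℝ))) ν := by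
    rw [integrable_indicator_iff hKδ_meas]
    exact integrableOn_const (hcpt (1 + δ)).measure_lt_top.ne
  have hind'_int : Integrable
      (Set.indicator {y : EuclideanSpace ℝ (Fin n) | f y ≤ 1 - δ} (fun _ => (1 : ℝ))) ν := by
    rw [integrable_indicator_iff hKδ'_meas]
    exact integrableOn_const (hcpt (1 - δ)).measure_lt_top.ne
  have hint_g : ∫ y, g y ∂ν ≤ (1 + δ) ^ d * c := by
    have hmono : ∀ y, g y ≤
        Set.indicator {y : EuclideanSpace ℝ (Fin n) | f y ≤ 1 + δ} (fun _ => (1 : ℝ)) y := by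
      intro y
      by_cases hy : f y ≤ 1 + δ
      · rw [Set.indicator_of_mem (show y ∈ {y : EuclideanSpace ℝ (Fin n) | f y ≤ 1 + δ} from hy)]; exact hg_le_one y
      · rw [Set.indicator_of_notMem (show y ∉ {y : EuclideanSpace ℝ (Fin n) | f y ≤ 1 + δ} from hy), hg_zero y (lt_of_not_ge hy)]
    have h := integral_mono hg_int hind_int hmono
    rwa [integral_indicator_const (1 : ℝ) hKδ_meas, smul_eq_mul, mul_one, measureReal_def,
      hνs_toReal (1 + δ) (by linarith)] at h
  have hint_g' : (1 - δ) ^ d * c ≤ ∫ y, g' y ∂ν := by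
    have hmono : ∀ y,
        Set.indicator {y : EuclideanSpace ℝ (Fin n) | f y ≤ 1 - δ} (fun _ => (1 : ℝ)) y
          ≤ g' y := by
      intro y
      by_cases hy : f y ≤ 1 - δ
      · rw [Set.indicator_of_mem (show y ∈ {y : EuclideanSpace ℝ (Fin n) | f y ≤ 1 - δ} from hy), hg'_one y hy]
      · rw [Set.indicator_of_notMem (show y ∉ {y : EuclideanSpace ℝ (Fin n) | f y ≤ 1 - δ} from hy)]; exact hg'_nonneg y
    have h := integral_mono hind'_int hg'_int hmono
    rwa [integral_indicator_const (1 : ℝ) hKδ'_meas, smul_eq_mul, mul_one, measureReal_def,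
      hνs_toReal (1 - δ) (by linarith)] at h
  -- counting bounds
  have hcount : ∀ L : ℝ, 0 < L →
      L ^ (-d) * ∑' i, g' (L⁻¹ • x i) ≤ ({i : ℕ | f (x i) ≤ L}.ncard : ℝ) / L ^ d ∧
      ({i : ℕ | f (x i) ≤ L}.ncard : ℝ) / L ^ d ≤ L ^ (-d) * ∑' i, g (L⁻¹ • x i) := by
    intro L hL
    have hLd : (0 : ℝ) < L ^ d := Real.rpow_pos_of_pos hL d
    have hrw : ∀ i, f (L⁻¹ • x i) = L⁻¹ * f (x i) := fun i => hf_hom L⁻¹ (inv_pos.2 hL) _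
    have hLL : L * L⁻¹ = 1 := mul_inv_cancel₀ hL.ne'
    have hSfin : {i : ℕ | f (x i) ≤ L}.Finite := by
      refine (h_fin L hL K hK_cpt).subset ?_
      intro i hi
      simp only [Set.mem_setOf_eq] at hi ⊢
      rw [Set.mem_smul_set_iff_inv_smul_mem₀ hL.ne']
      simp only [hK_def, Set.mem_setOf_eq, hrw]
      nlinarith [inv_pos.2 hL]
    have hTfin := h_fin L hL {y : EuclideanSpace ℝ (Fin n) | f y ≤ 1 + δ} (hcpt (1 + δ))
    have hgsum : Summable (fun i => g (L⁻¹ • x i)) := by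
      apply summable_of_ne_finset_zero (s := hTfin.toFinset)
      intro i hi
      rw [Set.Finite.mem_toFinset] at hi
      simp only [Set.mem_setOf_eq] at hi
      apply hg_zero
      by_contra hcon
      push_neg at hcon
      exact hi ((Set.mem_smul_set_iff_inv_smul_mem₀ hL.ne' _ _).2 hcon)
    have hcard : ({i : ℕ | f (x i) ≤ L}.ncard : ℝ) = ∑ i ∈ hSfin.toFinset, (1 : ℝ) := by
      rw [Set.ncard_eq_toFinset_card _ hSfin]
      simp
    constructor
    · have hz : ∀ i ∉ hSfin.toFinset, g' (L⁻¹ • x i) = 0 := by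
        intro i hi
        rw [Set.Finite.mem_toFinset] at hi
        simp only [Set.mem_setOf_eq] at hi
        push_neg at hi
        apply hg'_zero
        rw [hrw]
        nlinarith [inv_pos.2 hL]
      have hlb : ∑' i, g' (L⁻¹ • x i) ≤ ({i : ℕ | f (x i) ≤ L}.ncard : ℝ) := by
        rw [tsum_eq_sum hz, hcard]
        exact Finset.sum_le_sum fun i _ => hg'_le_one _
      rw [Real.rpow_neg hL.le, div_eq_inv_mul]
      exact mul_le_mul_of_nonneg_left hlb (by positivity)
    · have hub : ({i : ℕ | f (x i) ≤ L}.ncard : ℝ) ≤ ∑' i, g (L⁻¹ • x i) := by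
        rw [hcard]
        refine le_trans (Finset.sum_le_sum fun i hi => ?_)
          (Summable.sum_le_tsum _ (fun i _ => hg_nonneg _) hgsum)
        rw [Set.Finite.mem_toFinset] at hi
        simp only [Set.mem_setOf_eq] at hi
        rw [hg_one _ (by rw [hrw]; nlinarith [inv_pos.2 hL])]
      rw [Real.rpow_neg hL.le, div_eq_inv_mul]
      exact mul_le_mul_of_nonneg_left hub (by positivity)
  -- conclusion
  have hcg := Metric.tendsto_nhds.mp (h_conv g hg_cont hg_supp) (ε / 2) (half_pos hε)
  have hcg' := Metric.tendsto_nhds.mp (h_conv g' hg'_cont hg'_supp) (ε / 2) (half_pos hε)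
  filter_upwards [hcg, hcg', eventually_gt_atTop (0 : ℝ)] with L hLg hLg' hL
  obtain ⟨hlow, hup⟩ := hcount L hL
  rw [Real.dist_eq] at hLg hLg' hδ1 hδ2 ⊢
  rw [abs_sub_lt_iff] at hLg hLg' hδ1 hδ2 ⊢
  constructor
  · linarith [hup, hLg.1, hint_g, hδ1.1]
  · linarith [hlow, hLg'.2, hint_g', hδ2.2]
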